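/- If a consensus method φ satisfies unanimity and extension stability, then φ is Pareto on rooted triples: for any profile P of trees on X and any a,b,c ∈ X, if every tree in P displays the rooted triple ab|c, then φ(P) displays ab|c. -/

import Mathlib

/-- A (candidate) rooted phylogenetic tree, encoded by its set of clusters. -/
abbrev PTree : Type := Finset (Finset ℕ)

/-- Two clusters are nested: disjoint or one contained in the other. -/
abbrev Nested (C D : Finset ℕ) : Prop := C ∩ D = ∅ ∨ C ⊆ D ∨ D ⊆ C

/-- `H` is a hierarchy on leaf set `X`: a rooted phylogenetic tree in `RP(X)`. -/
structure IsHierarchy (X : Finset ℕ) (H : PTree) : Prop where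
  subset_top : ∀ C ∈ H, C ⊆ X
  cluster_nonempty : ∀ C ∈ H, C.Nonempty
  top_mem : X ∈ H
  singleton_mem : ∀ x ∈ X, ({x} : Finset ℕ) ∈ H
  laminar : ∀ C ∈ H, ∀ D ∈ H, Nested C D

/-- Restriction `T|_Y` of a tree to a subset `Y` of the leaves. -/
def restrictT (H : PTree) (Y : Finset ℕ) : PTree :=
  (H.image (fun C => C ∩ Y)).filter (fun C => C.Nonempty)

/-- A consensus method: for every leaf set and profile, an output tree. -/
abbrev ConsensusMethod : Type := Finset ℕ → List PTree → PTree

/-- Relabel the leaves of a tree by `f`. -/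
def relabelT (f : ℕ → ℕ) (H : PTree) : PTree := H.image (fun C => C.image f)

/-- A consensus method sends profiles of trees on `X` to a tree on `X`. -/
def ProducesHierarchy (φ : ConsensusMethod) : Prop :=
  ∀ (X : Finset ℕ) (P : List PTree), P ≠ [] → (∀ T ∈ P, IsHierarchy X T) →
    IsHierarchy X (φ X P)

/-- Unanimity: a constant profile yields that tree. -/
def Unanimity (φ : ConsensusMethod) : Prop :=
  ∀ (X : Finset ℕ) (T : PTree) (k : ℕ), k ≠ 0 → IsHierarchy X T →
    φ X (List.replicate k T) = T

/-- Anonymity: invariance under reordering the profile. -/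
def Anonymity (φ : ConsensusMethod) : Prop :=
  ∀ (X : Finset ℕ) (P P' : List PTree), (∀ T ∈ P, IsHierarchy X T) →
    P.Perm P' → φ X P = φ X P'

/-- Neutrality: equivariance under relabelling the leaves by a bijection. -/
def Neutrality (φ : ConsensusMethod) : Prop :=
  ∀ (X : Finset ℕ) (P : List PTree) (e : ℕ ≃ ℕ), (∀ T ∈ P, IsHierarchy X T) →
    φ (X.image e) (P.map (relabelT e)) = relabelT e (φ X P)

/-- Extension stability: `φ(P|_Y) ⪯ φ(P)|_Y` (every cluster of the consensus of
the restricted profile is a cluster of the restriction of the consensus). -/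
def ExtensionStable (φ : ConsensusMethod) : Prop :=
  ∀ (X : Finset ℕ) (P : List PTree) (Y : Finset ℕ), (∀ T ∈ P, IsHierarchy X T) →
    Y ⊆ X → Y.Nonempty →
    φ Y (P.map (fun T => restrictT T Y)) ⊆ restrictT (φ X P) Y

/-- `T` displays the rooted triple `ab|c`: some cluster contains `a,b` but not `c`. -/
def Displays (T : PTree) (a b c : ℕ) : Prop := ∃ C ∈ T, a ∈ C ∧ b ∈ C ∧ c ∉ C

lemma mem_restrictT {H : PTree} {Y C : Finset ℕ} :
    C ∈ restrictT H Y ↔ (∃ D ∈ H, D ∩ Y = C) ∧ C.Nonempty := by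
  simp [restrictT, Finset.mem_filter, Finset.mem_image]

lemma restrict_hierarchy {X : Finset ℕ} {H : PTree} (hH : IsHierarchy X H)
    {Y : Finset ℕ} (hYX : Y ⊆ X) (hY : Y.Nonempty) :
    IsHierarchy Y (restrictT H Y) := by
  constructor
  · intro C hC
    rcases mem_restrictT.1 hC with ⟨⟨D, _, rfl⟩, _⟩
    exact Finset.inter_subset_right
  · intro C hC
    exact (mem_restrictT.1 hC).2
  · refine mem_restrictT.2 ⟨⟨X, hH.top_mem, ?_⟩, hY⟩
    exact Finset.inter_eq_right.2 hYX
  · intro x hx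
    refine mem_restrictT.2 ⟨⟨{x}, hH.singleton_mem x (hYX hx), ?_⟩, ⟨x, Finset.mem_singleton_self x⟩⟩
    simp [Finset.singleton_inter_of_mem hx]
  · intro C hC D hD
    rcases mem_restrictT.1 hC with ⟨⟨C', hC', rfl⟩, _⟩
    rcases mem_restrictT.1 hD with ⟨⟨D', hD', rfl⟩, _⟩
    rcases hH.laminar C' hC' D' hD' with h | h | h
    · left
      apply Finset.eq_empty_iff_forall_notMem.2
      intro x hx
      simp only [Finset.mem_inter] at hx
      have : x ∈ C' ∩ D' := Finset.mem_inter.2 ⟨hx.1.1, hx.2.1⟩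
      simp [h] at this
    · right; left; exact Finset.inter_subset_inter_right h
    · right; right; exact Finset.inter_subset_inter_right h

lemma restrict_eq_T0 {X : Finset ℕ} {T : PTree} (hT : IsHierarchy X T)
    {a b c : ℕ} (ha : a ∈ X) (hb : b ∈ X) (hc : c ∈ X)
    (hab : a ≠ b) (hac : a ≠ c) (hbc : b ≠ c)
    (hd : Displays T a b c) :
    restrictT T {a, b, c} =
      ({({a, b, c} : Finset ℕ), {a}, {b}, {c}, {a, b}} : PTree) := by
  have hYX : ({a, b, c} : Finset ℕ) ⊆ X := by
    intro x hx; simp only [Finset.mem_insert, Finset.mem_singleton] at hx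
    rcases hx with rfl | rfl | rfl <;> assumption
  have hY : ({a, b, c} : Finset ℕ).Nonempty := ⟨a, by simp⟩
  have hR := restrict_hierarchy hT hYX hY
  -- {a,b} is a cluster of the restriction
  rcases hd with ⟨C, hC, haC, hbC, hcC⟩
  have hab_mem : ({a, b} : Finset ℕ) ∈ restrictT T {a, b, c} := by
    refine mem_restrictT.2 ⟨⟨C, hC, ?_⟩, ⟨a, by simp⟩⟩
    ext x
    simp only [Finset.mem_inter, Finset.mem_insert, Finset.mem_singleton]
    constructor
    · rintro ⟨hxC, rfl | rfl | rfl⟩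
      · left; rfl
      · right; rfl
      · exact absurd hxC hcC
    · rintro (rfl | rfl)
      · exact ⟨haC, Or.inl rfl⟩
      · exact ⟨hbC, Or.inr (Or.inl rfl)⟩
  ext D
  simp only [Finset.mem_insert, Finset.mem_singleton]
  constructor
  · intro hD
    have hsub := hR.subset_top D hD
    have hne := hR.cluster_nonempty D hD
    have hlam := hR.laminar D hD _ hab_mem
    by_cases haD : a ∈ D <;> by_cases hbD : b ∈ D <;> by_cases hcD : c ∈ D
    · -- a,b,c ∈ D : D = {a,b,c}
      left
      apply Finset.Subset.antisymm hsub
      intro x hx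
      simp only [Finset.mem_insert, Finset.mem_singleton] at hx
      rcases hx with rfl | rfl | rfl <;> assumption
    · -- D = {a,b}
      right; right; right; right
      apply Finset.Subset.antisymm
      · intro x hx
        have := hsub hx
        simp only [Finset.mem_insert, Finset.mem_singleton] at this ⊢
        rcases this with rfl | rfl | rfl
        · left; rfl
        · right; rfl
        · exact absurd hx hcD
      · intro x hx
        simp only [Finset.mem_insert, Finset.mem_singleton] at hx
        rcases hx with rfl | rfl <;> assumption
    · -- a,c ∈ D, b ∉ D : contradicts laminarity with {a,b}
      exfalso
      rcases hlam with h | h | h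
      · have : a ∈ D ∩ {a, b} := Finset.mem_inter.2 ⟨haD, by simp⟩
        simp [h] at this
      · have := h hcD
        simp only [Finset.mem_insert, Finset.mem_singleton] at this
        rcases this with rfl | rfl
        · exact hac rfl
        · exact hbc rfl
      · exact hbD (h (by simp))
    · right; left
      apply Finset.Subset.antisymm
      · intro x hx
        have := hsub hx
        simp only [Finset.mem_insert, Finset.mem_singleton] at this ⊢
        rcases this with rfl | rfl | rfl
        · rfl
        · exact absurd hx hbD
        · exact absurd hx hcD
      · intro x hx
        simp only [Finset.mem_singleton] at hx
        subst hx; assumption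
    · -- b,c ∈ D, a ∉ D : contradicts laminarity
      exfalso
      rcases hlam with h | h | h
      · have : b ∈ D ∩ {a, b} := Finset.mem_inter.2 ⟨hbD, by simp⟩
        simp [h] at this
      · have := h hcD
        simp only [Finset.mem_insert, Finset.mem_singleton] at this
        rcases this with rfl | rfl
        · exact hac rfl
        · exact hbc rfl
      · exact haD (h (by simp))
    · right; right; left
      apply Finset.Subset.antisymm
      · intro x hx
        have := hsub hx
        simp only [Finset.mem_insert, Finset.mem_singleton] at this ⊢
        rcases this with rfl | rfl | rfl
        · exact absurd hx haD
        · rfl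
        · exact absurd hx hcD
      · intro x hx
        simp only [Finset.mem_singleton] at hx
        subst hx; assumption
    · right; right; right; left
      apply Finset.Subset.antisymm
      · intro x hx
        have := hsub hx
        simp only [Finset.mem_insert, Finset.mem_singleton] at this ⊢
        rcases this with rfl | rfl | rfl
        · exact absurd hx haD
        · exact absurd hx hbD
        · rfl
      · intro x hx
        simp only [Finset.mem_singleton] at hx
        subst hx; assumption
    · exfalso
      rcases hne with ⟨x, hx⟩
      have := hsub hx
      simp only [Finset.mem_insert, Finset.mem_singleton] at this
      rcases this with rfl | rfl | rfl
      · exact haD hx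
      · exact hbD hx
      · exact hcD hx
  · rintro (rfl | rfl | rfl | rfl | rfl)
    · exact hR.top_mem
    · exact hR.singleton_mem a (by simp)
    · exact hR.singleton_mem b (by simp)
    · exact hR.singleton_mem c (by simp)
    · exact hab_mem

/-- A consensus method satisfying unanimity and extension stability is
Pareto on rooted triples. -/
theorem pareto_rooted_triples_of_unanimity_extension_stable (φ : ConsensusMethod)
    (hH : ProducesHierarchy φ) (hU : Unanimity φ) (hE : ExtensionStable φ)
    (X : Finset ℕ) (P : List PTree) (hP : P ≠ []) (hh : ∀ T ∈ P, IsHierarchy X T)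
    (a b c : ℕ) (ha : a ∈ X) (hb : b ∈ X) (hc : c ∈ X)
    (hab : a ≠ b) (hac : a ≠ c) (hbc : b ≠ c)
    (hdisp : ∀ T ∈ P, Displays T a b c) :
    Displays (φ X P) a b c := by
  set Y : Finset ℕ := {a, b, c} with hYdef
  have hYX : Y ⊆ X := by
    intro x hx; simp only [hYdef, Finset.mem_insert, Finset.mem_singleton] at hx
    rcases hx with rfl | rfl | rfl <;> assumption
  have hY : Y.Nonempty := ⟨a, by simp [hYdef]⟩
  set T0 : PTree := ({({a, b, c} : Finset ℕ), {a}, {b}, {c}, {a, b}} : PTree) with hT0def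
  have hmap : P.map (fun T => restrictT T Y) = List.replicate P.length T0 := by
    refine List.eq_replicate_iff.2 ⟨by simp, ?_⟩
    intro R hR
    rcases List.mem_map.1 hR with ⟨T, hT, rfl⟩
    exact restrict_eq_T0 (hh T hT) ha hb hc hab hac hbc (hdisp T hT)
  have hT0hier : IsHierarchy Y T0 := by
    rcases List.exists_mem_of_ne_nil P hP with ⟨T, hT⟩
    have := restrict_eq_T0 (hh T hT) ha hb hc hab hac hbc (hdisp T hT)
    rw [hT0def, ← this]
    exact restrict_hierarchy (hh T hT) hYX hY
  have hlen : P.length ≠ 0 := fun h => hP (List.length_eq_zero_iff.1 h)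
  have hU' : φ Y (P.map (fun T => restrictT T Y)) = T0 := by
    rw [hmap]; exact hU Y T0 P.length hlen hT0hier
  have hsub := hE X P Y hh hYX hY
  have hab_mem : ({a, b} : Finset ℕ) ∈ restrictT (φ X P) Y := by
    apply hsub
    rw [hU']
    simp [hT0def]
  rcases mem_restrictT.1 hab_mem with ⟨⟨C, hC, hCY⟩, _⟩
  refine ⟨C, hC, ?_, ?_, ?_⟩
  · have : a ∈ C ∩ Y := by rw [hCY]; simp
    exact (Finset.mem_inter.1 this).1
  · have : b ∈ C ∩ Y := by rw [hCY]; simp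
    exact (Finset.mem_inter.1 this).1
  · intro hcC
    have : c ∈ C ∩ Y := Finset.mem_inter.2 ⟨hcC, by simp [hYdef]⟩
    rw [hCY] at this
    simp only [Finset.mem_insert, Finset.mem_singleton] at this
    rcases this with rfl | rfl
    · exact hac rfl
    · exact hbc rfl
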